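/- The class of finite echeloned spaces has the strong amalgamation property: given finite echeloned spaces A, B₁, B₂ and embeddings f₁ : A ↪ B₁, f₂ : A ↪ B₂, there exist a finite echeloned space C and embeddings g₁ : B₁ ↪ C, g₂ : B₂ ↪ C with g₁ ∘ f₁ = g₂ ∘ f₂ and g₁[B₁] ∩ g₂[B₂] = g₁[f₁[A]]. -/

import Mathlib

/-- An echeloned space: a total preorder on `X × X` satisfying the three echelon axioms. -/
def IsEcheloned {X : Type*} (le : X × X → X × X → Prop) : Prop :=
  (∀ p, le p p) ∧ (∀ p q r, le p q → le q r → le p r) ∧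
  (∀ p q, le p q ∨ le q p) ∧
  (∀ x y z : X, le (x, x) (y, z)) ∧
  (∀ x y z : X, le (y, z) (x, x) → y = z) ∧
  (∀ x y : X, le (x, y) (y, x))

/-- An embedding of echeloned spaces: an injective map preserving and reflecting `≤`. -/
def IsEchEmbedding {X Y : Type*} (leX : X × X → X × X → Prop)
    (leY : Y × Y → Y × Y → Prop) (f : X → Y) : Prop :=
  Function.Injective f ∧
    ∀ p q : X × X, leX p q ↔ leY (f p.1, f p.2) (f q.1, f q.2)

open Classical in
/-- Rank of a pair in `B` relative to the embedded copy of `A`. -/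
noncomputable def dEch {A B : Type} (leB : B × B → B × B → Prop) (f : A → B) (c : ℕ)
    (p : B × B) : ℕ ×ₗ (ℕ ×ₗ ℕ) :=
  toLex (Set.ncard {s : A × A | leB (f s.1, f s.2) p},
    if (∃ s : A × A, leB (f s.1, f s.2) p ∧ leB p (f s.1, f s.2)) then toLex ((0 : ℕ), (0 : ℕ))
    else toLex (c, Set.ncard {q : B × B | leB q p ∧ ¬ leB p q}))

section lemmas

variable {A B : Type} [Finite A] [Finite B] {leB : B × B → B × B → Prop} {f : A → B} {c : ℕ}

lemma dEch_eq_of_equiv (htrans : ∀ p q r, leB p q → leB q r → leB p r)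
    {p q : B × B} (h1 : leB p q) (h2 : leB q p) : dEch leB f c p = dEch leB f c q := by
  classical
  have hS : {s : A × A | leB (f s.1, f s.2) p} = {s : A × A | leB (f s.1, f s.2) q} := by
    ext s; exact ⟨fun h => htrans _ _ _ h h1, fun h => htrans _ _ _ h h2⟩
  have hE : (∃ s : A × A, leB (f s.1, f s.2) p ∧ leB p (f s.1, f s.2)) ↔
      (∃ s : A × A, leB (f s.1, f s.2) q ∧ leB q (f s.1, f s.2)) := by
    constructor
    · rintro ⟨s, hs1, hs2⟩; exact ⟨s, htrans _ _ _ hs1 h1, htrans _ _ _ h2 hs2⟩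
    · rintro ⟨s, hs1, hs2⟩; exact ⟨s, htrans _ _ _ hs1 h2, htrans _ _ _ h1 hs2⟩
  have hN : {r : B × B | leB r p ∧ ¬ leB p r} = {r : B × B | leB r q ∧ ¬ leB q r} := by
    ext r
    constructor
    · rintro ⟨hr1, hr2⟩
      exact ⟨htrans _ _ _ hr1 h1, fun h => hr2 (htrans _ _ _ h1 h)⟩
    · rintro ⟨hr1, hr2⟩
      exact ⟨htrans _ _ _ hr1 h2, fun h => hr2 (htrans _ _ _ h2 h)⟩
  rw [dEch, dEch, hS, hN]
  exact congrArg toLex (Prod.ext rfl (if_congr hE rfl rfl))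

lemma dEch_lt_of_lt (htrans : ∀ p q r, leB p q → leB q r → leB p r) (hc : 0 < c)
    {p q : B × B} (h1 : leB p q) (h2 : ¬ leB q p) : dEch leB f c p < dEch leB f c q := by
  set Sp := {s : A × A | leB (f s.1, f s.2) p} with hSp
  set Sq := {s : A × A | leB (f s.1, f s.2) q} with hSq
  have hsub : Sp ⊆ Sq := fun s hs => htrans _ _ _ hs h1
  have hle : Sp.ncard ≤ Sq.ncard := Set.ncard_le_ncard hsub (Set.toFinite _)
  rw [dEch, dEch, Prod.Lex.lt_iff]
  rcases lt_or_eq_of_le hle with hlt | heq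
  · exact Or.inl hlt
  · right
    refine ⟨heq, ?_⟩
    by_cases hq : (∃ s : A × A, leB (f s.1, f s.2) q ∧ leB q (f s.1, f s.2))
    · -- q is equivalent to an image of an A-pair; then Sp ⊂ Sq, contradiction with heq
      exfalso
      obtain ⟨s, hs1, hs2⟩ := hq
      have hsq : s ∈ Sq := hs1
      have hsp : s ∉ Sp := fun h => h2 (htrans _ _ _ hs2 h)
      have : Sp.ncard < Sq.ncard := by
        refine Set.ncard_lt_ncard ?_ (Set.toFinite _)
        exact (Set.ssubset_iff_of_subset hsub).2 ⟨s, hsq, hsp⟩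
      omega
    · rw [if_neg hq]
      by_cases hp : (∃ s : A × A, leB (f s.1, f s.2) p ∧ leB p (f s.1, f s.2))
      · rw [if_pos hp, Prod.Lex.lt_iff]
        exact Or.inl hc
      · rw [if_neg hp, Prod.Lex.lt_iff]
        right
        refine ⟨rfl, ?_⟩
        refine Set.ncard_lt_ncard ?_ (Set.toFinite _)
        refine (Set.ssubset_iff_of_subset ?_).2 ⟨p, ⟨h1, h2⟩, fun h => h.2 h.1⟩
        rintro r ⟨hr1, hr2⟩
        exact ⟨htrans _ _ _ hr1 h1, fun h => hr2 (htrans _ _ _ h1 h)⟩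

lemma dEch_le_iff (hB : IsEcheloned leB) (hc : 0 < c) (p q : B × B) :
    leB p q ↔ dEch leB f c p ≤ dEch leB f c q := by
  obtain ⟨hrefl, htrans, htot, hmin, hdiag, hsymm⟩ := hB
  constructor
  · intro h
    by_cases h' : leB q p
    · exact le_of_eq (dEch_eq_of_equiv htrans h h')
    · exact le_of_lt (dEch_lt_of_lt htrans hc h h')
  · intro h
    by_contra hpq
    rcases htot p q with h1 | h1
    · exact hpq h1
    · exact absurd h (not_le_of_gt (dEch_lt_of_lt htrans hc h1 hpq))

lemma dEch_apply_image {leA : A × A → A × A → Prop} (hrefl : ∀ p, leB p p)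
    (hf : IsEchEmbedding leA leB f) (a b : A) :
    dEch leB f c (f a, f b) = toLex (Set.ncard {t : A × A | leA t (a, b)}, toLex (0, 0)) := by
  classical
  have hS : {s : A × A | leB (f s.1, f s.2) (f a, f b)} = {t : A × A | leA t (a, b)} := by
    ext t; exact (hf.2 t (a, b)).symm
  have hE : (∃ s : A × A, leB (f s.1, f s.2) (f a, f b) ∧ leB (f a, f b) (f s.1, f s.2)) :=
    ⟨(a, b), hrefl _, hrefl _⟩
  rw [dEch, hS, if_pos hE]

lemma dEch_diag [Nonempty A] (hB : IsEcheloned leB) (hfinj : Function.Injective f) (x : B) :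
    dEch leB f c (x, x) = toLex (Set.ncard {t : A × A | t.1 = t.2}, toLex (0, 0)) := by
  classical
  obtain ⟨hrefl, htrans, htot, hmin, hdiag, hsymm⟩ := hB
  have hS : {s : A × A | leB (f s.1, f s.2) (x, x)} = {t : A × A | t.1 = t.2} := by
    ext t
    constructor
    · intro h; exact hfinj (hdiag x _ _ h)
    · intro h
      have : (f t.1, f t.2) = (f t.1, f t.1) := by rw [show t.2 = t.1 from h.symm ▸ rfl]
      simp only [Set.mem_setOf_eq]
      rw [show t.2 = t.1 from h.symm ▸ rfl]
      exact hmin (f t.1) x x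
  have hE : (∃ s : A × A, leB (f s.1, f s.2) (x, x) ∧ leB (x, x) (f s.1, f s.2)) := by
    obtain ⟨a⟩ := ‹Nonempty A›
    exact ⟨(a, a), hmin (f a) x x, hmin x (f a) (f a)⟩
  rw [dEch, hS, if_pos hE]

lemma dEch_min (hmin : ∀ x y z : B, leB (x, x) (y, z)) (p : B × B) :
    toLex (Set.ncard {t : A × A | t.1 = t.2}, toLex ((0:ℕ), (0:ℕ))) ≤ dEch leB f c p := by
  classical
  have hsub : {t : A × A | t.1 = t.2} ⊆ {s : A × A | leB (f s.1, f s.2) p} := by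
    intro t ht
    simp only [Set.mem_setOf_eq] at ht ⊢
    rw [show t.2 = t.1 from ht.symm ▸ rfl]
    exact hmin (f t.1) p.1 p.2
  have hle := Set.ncard_le_ncard hsub (Set.toFinite _)
  rw [dEch, Prod.Lex.le_iff]
  rcases lt_or_eq_of_le hle with h | h
  · exact Or.inl h
  · refine Or.inr ⟨h, ?_⟩
    split
    · exact le_refl _
    · rw [Prod.Lex.le_iff]; simp only [ofLex_toLex]; omega

lemma dEch_le_min [Nonempty A] (hB : IsEcheloned leB) (hfinj : Function.Injective f)
    (hc : 0 < c) {p : B × B}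
    (h : dEch leB f c p ≤ toLex (Set.ncard {t : A × A | t.1 = t.2}, toLex ((0:ℕ), (0:ℕ)))) :
    p.1 = p.2 := by
  classical
  obtain ⟨hrefl, htrans, htot, hmin, hdiag, hsymm⟩ := hB
  have hsub : {t : A × A | t.1 = t.2} ⊆ {s : A × A | leB (f s.1, f s.2) p} := by
    intro t ht
    simp only [Set.mem_setOf_eq] at ht ⊢
    rw [show t.2 = t.1 from ht.symm ▸ rfl]
    exact hmin (f t.1) p.1 p.2
  have hle := Set.ncard_le_ncard hsub (Set.toFinite _)
  rw [dEch, Prod.Lex.le_iff] at h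
  rcases h with h | ⟨h1, h2⟩
  · simp only [ofLex_toLex] at h; omega
  · by_cases hE : (∃ s : A × A, leB (f s.1, f s.2) p ∧ leB p (f s.1, f s.2))
    · obtain ⟨s, hs1, hs2⟩ := hE
      have hdiags : s.1 = s.2 := by
        by_contra hne
        have hins : insert s {t : A × A | t.1 = t.2} ⊆ {s' : A × A | leB (f s'.1, f s'.2) p} := by
          intro t ht
          rcases ht with rfl | ht
          · exact hs1
          · exact hsub ht
        have h1' := Set.ncard_le_ncard hins (Set.toFinite _)
        rw [Set.ncard_insert_of_notMem (by simpa using hne)] at h1'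
        simp only [ofLex_toLex] at h1
        omega
      have : leB (p.1, p.2) (f s.1, f s.1) := by
        have := hs2
        rw [show s.2 = s.1 from hdiags.symm ▸ rfl] at this
        exact this
      exact hdiag (f s.1) p.1 p.2 this
    · rw [if_neg hE, Prod.Lex.le_iff] at h2
      simp only [ofLex_toLex] at h2
      omega

end lemmas

open Classical in
/-- The amalgamated rank function on the sum. -/
noncomputable def dAmalg {A B₁ B₂ : Type} (f₁ : A → B₁) (f₂ : A → B₂)
    (d₁ : B₁ × B₁ → ℕ ×ₗ (ℕ ×ₗ ℕ)) (d₂ : B₂ × B₂ → ℕ ×ₗ (ℕ ×ₗ ℕ)) (v : ℕ ×ₗ (ℕ ×ₗ ℕ)) :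
    (B₁ ⊕ B₂) × (B₁ ⊕ B₂) → ℕ ×ₗ (ℕ ×ₗ ℕ)
  | (Sum.inl x, Sum.inl y) => d₁ (x, y)
  | (Sum.inr x, Sum.inr y) => d₂ (x, y)
  | (Sum.inl x, Sum.inr y) =>
      if h : (∃ a, f₁ a = x) ∧ ¬ (∃ a, f₂ a = y) then d₂ (f₂ h.1.choose, y) else v
  | (Sum.inr y, Sum.inl x) =>
      if h : (∃ a, f₁ a = x) ∧ ¬ (∃ a, f₂ a = y) then d₂ (f₂ h.1.choose, y) else v


/-- The class of finite echeloned spaces has the strong amalgamation property. -/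
theorem finite_echeloned_strong_amalgamation {A B₁ B₂ : Type}
    [Finite A] [Finite B₁] [Finite B₂] [Nonempty A]
    (leA : A × A → A × A → Prop) (leB₁ : B₁ × B₁ → B₁ × B₁ → Prop)
    (leB₂ : B₂ × B₂ → B₂ × B₂ → Prop)
    (hA : IsEcheloned leA) (hB₁ : IsEcheloned leB₁) (hB₂ : IsEcheloned leB₂)
    (f₁ : A → B₁) (f₂ : A → B₂)
    (hf₁ : IsEchEmbedding leA leB₁ f₁) (hf₂ : IsEchEmbedding leA leB₂ f₂) :
    ∃ (C : Type) (leC : C × C → C × C → Prop), Finite C ∧ IsEcheloned leC ∧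
      ∃ (g₁ : B₁ → C) (g₂ : B₂ → C),
        IsEchEmbedding leB₁ leC g₁ ∧ IsEchEmbedding leB₂ leC g₂ ∧
        g₁ ∘ f₁ = g₂ ∘ f₂ ∧
        Set.range g₁ ∩ Set.range g₂ = g₁ '' Set.range f₁ := by
  classical
  set m : ℕ ×ₗ (ℕ ×ₗ ℕ) := toLex (Set.ncard {t : A × A | t.1 = t.2}, toLex (0, 0)) with hm
  set v : ℕ ×ₗ (ℕ ×ₗ ℕ) := toLex (Set.ncard {t : A × A | t.1 = t.2}, toLex (0, 1)) with hv
  set d₁ : B₁ × B₁ → ℕ ×ₗ (ℕ ×ₗ ℕ) := dEch leB₁ f₁ 1 with hd₁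
  set d₂ : B₂ × B₂ → ℕ ×ₗ (ℕ ×ₗ ℕ) := dEch leB₂ f₂ 1 with hd₂
  set dC := dAmalg f₁ f₂ d₁ d₂ v with hdC
  -- matching on A
  have hAval : ∀ a b : A, d₁ (f₁ a, f₁ b) = d₂ (f₂ a, f₂ b) := by
    intro a b
    rw [hd₁, hd₂, dEch_apply_image hB₁.1 hf₁, dEch_apply_image hB₂.1 hf₂]
  -- the maps
  set g₁ : B₁ → B₁ ⊕ B₂ := Sum.inl with hg₁
  set g₂ : B₂ → B₁ ⊕ B₂ := fun y =>
    if h : ∃ a, f₂ a = y then Sum.inl (f₁ h.choose) else Sum.inr y with hg₂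
  have hg₂pos : ∀ (a : A), g₂ (f₂ a) = Sum.inl (f₁ a) := by
    intro a
    rw [hg₂]
    simp only
    rw [dif_pos ⟨a, rfl⟩]
    congr 1
    exact congrArg f₁ (hf₂.1 (⟨a, rfl⟩ : ∃ a', f₂ a' = f₂ a).choose_spec)
  have hg₂neg : ∀ y, (¬ ∃ a, f₂ a = y) → g₂ y = Sum.inr y := by
    intro y hy
    rw [hg₂]
    exact dif_neg hy
  have hd₂symm : ∀ u w : B₂, d₂ (u, w) = d₂ (w, u) := fun u w =>
    dEch_eq_of_equiv hB₂.2.1 (hB₂.2.2.2.2.2 u w) (hB₂.2.2.2.2.2 w u)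
  -- value of dC on g₂ pairs
  have hg₂val : ∀ x y : B₂, dC (g₂ x, g₂ y) = d₂ (x, y) := by
    intro x y
    by_cases hx : ∃ a, f₂ a = x
    · obtain ⟨ax, rfl⟩ := hx
      rw [hg₂pos ax]
      by_cases hy : ∃ a, f₂ a = y
      · obtain ⟨ay, rfl⟩ := hy
        rw [hg₂pos ay]
        show d₁ (f₁ ax, f₁ ay) = _
        exact hAval ax ay
      · rw [hg₂neg y hy]
        show (if h : (∃ a, f₁ a = f₁ ax) ∧ ¬ (∃ a, f₂ a = y) then d₂ (f₂ h.1.choose, y) else v)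
            = d₂ (f₂ ax, y)
        rw [dif_pos ⟨⟨ax, rfl⟩, hy⟩]
        rw [hf₁.1 ((⟨ax, rfl⟩ : ∃ a', f₁ a' = f₁ ax).choose_spec)]
    · rw [hg₂neg x hx]
      by_cases hy : ∃ a, f₂ a = y
      · obtain ⟨ay, rfl⟩ := hy
        rw [hg₂pos ay]
        show (if h : (∃ a, f₁ a = f₁ ay) ∧ ¬ (∃ a, f₂ a = x) then d₂ (f₂ h.1.choose, x) else v)
            = d₂ (x, f₂ ay)
        rw [dif_pos ⟨⟨ay, rfl⟩, hx⟩]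
        have hch : (⟨ay, rfl⟩ : ∃ a', f₁ a' = f₁ ay).choose = ay :=
          hf₁.1 ((⟨ay, rfl⟩ : ∃ a', f₁ a' = f₁ ay).choose_spec)
        rw [hch]
        exact hd₂symm _ _
      · rw [hg₂neg y hy]
        rfl
  have hd₁symm : ∀ u w : B₁, d₁ (u, w) = d₁ (w, u) := fun u w =>
    dEch_eq_of_equiv hB₁.2.1 (hB₁.2.2.2.2.2 u w) (hB₁.2.2.2.2.2 w u)
  have hmv : m ≤ v := by
    rw [hm, hv, Prod.Lex.le_iff]
    right
    refine ⟨rfl, ?_⟩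
    rw [Prod.Lex.le_iff]
    right
    exact ⟨rfl, zero_le_one⟩
  have hvnm : ¬ (v ≤ m) := by
    rw [hm, hv, Prod.Lex.le_iff]
    rintro (h | ⟨-, h⟩)
    · exact lt_irrefl _ h
    · rw [Prod.Lex.le_iff] at h
      rcases h with h | ⟨-, h⟩
      · exact lt_irrefl _ h
      · exact absurd h (by norm_num)
  have hdiagC : ∀ z : B₁ ⊕ B₂, dC (z, z) = m := by
    rintro (x | x)
    · show d₁ (x, x) = m
      rw [hd₁, hm]
      exact dEch_diag hB₁ hf₁.1 x
    · show d₂ (x, x) = m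
      rw [hd₂, hm]
      exact dEch_diag hB₂ hf₂.1 x
  have hminC : ∀ p, m ≤ dC p := by
    rintro ⟨x | x, y | y⟩
    · show m ≤ d₁ (x, y)
      rw [hd₁, hm]
      exact dEch_min hB₁.2.2.2.1 (x, y)
    · show m ≤ (if h : (∃ a, f₁ a = x) ∧ ¬ (∃ a, f₂ a = y) then d₂ (f₂ h.1.choose, y) else v)
      split
      · rw [hd₂, hm]
        exact dEch_min hB₂.2.2.2.1 _
      · exact hmv
    · show m ≤ (if h : (∃ a, f₁ a = y) ∧ ¬ (∃ a, f₂ a = x) then d₂ (f₂ h.1.choose, x) else v)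
      split
      · rw [hd₂, hm]
        exact dEch_min hB₂.2.2.2.1 _
      · exact hmv
    · show m ≤ d₂ (x, y)
      rw [hd₂, hm]
      exact dEch_min hB₂.2.2.2.1 (x, y)
  have hdiagimpC : ∀ p : (B₁ ⊕ B₂) × (B₁ ⊕ B₂), dC p ≤ m → p.1 = p.2 := by
    rintro ⟨x | x, y | y⟩ h
    · have : x = y := by
        rw [hm] at h
        exact dEch_le_min hB₁ hf₁.1 one_pos h
      exact congrArg Sum.inl this
    · exfalso
      revert h
      show ¬ ((if h : (∃ a, f₁ a = x) ∧ ¬ (∃ a, f₂ a = y) then d₂ (f₂ h.1.choose, y) else v) ≤ m)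
      split
      · next hcond =>
        intro h
        rw [hm] at h
        have := dEch_le_min hB₂ hf₂.1 one_pos h
        exact hcond.2 ⟨_, this⟩
      · exact hvnm
    · exfalso
      revert h
      show ¬ ((if h : (∃ a, f₁ a = y) ∧ ¬ (∃ a, f₂ a = x) then d₂ (f₂ h.1.choose, x) else v) ≤ m)
      split
      · next hcond =>
        intro h
        rw [hm] at h
        have := dEch_le_min hB₂ hf₂.1 one_pos h
        exact hcond.2 ⟨_, this⟩
      · exact hvnm
    · have : x = y := by
        rw [hm] at h
        exact dEch_le_min hB₂ hf₂.1 one_pos h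
      exact congrArg Sum.inr this
  have hsymmC : ∀ p q : B₁ ⊕ B₂, dC (p, q) = dC (q, p) := by
    rintro (x | x) (y | y)
    · exact hd₁symm x y
    · rfl
    · rfl
    · exact hd₂symm x y
  refine ⟨B₁ ⊕ B₂, fun p q => dC p ≤ dC q, inferInstance, ?_, g₁, g₂, ?_, ?_, ?_, ?_⟩
  · refine ⟨fun p => le_refl _, fun p q r h1 h2 => le_trans h1 h2,
      fun p q => le_total _ _, ?_, ?_, ?_⟩
    · intro x y z
      show dC (x, x) ≤ dC (y, z)
      rw [hdiagC]
      exact hminC (y, z)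
    · intro x y z h
      replace h : dC (y, z) ≤ dC (x, x) := h
      rw [hdiagC] at h
      exact hdiagimpC (y, z) h
    · intro x y
      show dC (x, y) ≤ dC (y, x)
      rw [hsymmC]
  · refine ⟨Sum.inl_injective, fun p q => ?_⟩
    show leB₁ p q ↔ d₁ (p.1, p.2) ≤ d₁ (q.1, q.2)
    rw [hd₁]
    exact dEch_le_iff hB₁ one_pos p q
  · constructor
    · intro x y h
      by_cases hx : ∃ a, f₂ a = x
      · obtain ⟨ax, rfl⟩ := hx
        rw [hg₂pos ax] at h
        by_cases hy : ∃ a, f₂ a = y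
        · obtain ⟨ay, rfl⟩ := hy
          rw [hg₂pos ay] at h
          exact congrArg f₂ (hf₁.1 (Sum.inl_injective h))
        · rw [hg₂neg y hy] at h
          exact absurd h (by simp)
      · rw [hg₂neg x hx] at h
        by_cases hy : ∃ a, f₂ a = y
        · obtain ⟨ay, rfl⟩ := hy
          rw [hg₂pos ay] at h
          exact absurd h (by simp)
        · rw [hg₂neg y hy] at h
          exact Sum.inr_injective h
    · intro p q
      show leB₂ p q ↔ dC (g₂ p.1, g₂ p.2) ≤ dC (g₂ q.1, g₂ q.2)
      rw [hg₂val, hg₂val]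
      rw [hd₂]
      exact dEch_le_iff hB₂ one_pos p q
  · funext a
    show g₁ (f₁ a) = g₂ (f₂ a)
    rw [hg₂pos a]
  · ext z
    simp only [Set.mem_inter_iff, Set.mem_range, Set.mem_image]
    constructor
    · rintro ⟨⟨b, rfl⟩, ⟨y, hy⟩⟩
      by_cases hy' : ∃ a, f₂ a = y
      · obtain ⟨a, rfl⟩ := hy'
        rw [hg₂pos a] at hy
        exact ⟨f₁ a, ⟨a, rfl⟩, hy⟩
      · rw [hg₂neg y hy'] at hy
        exact absurd hy (by simp [hg₁])
    · rintro ⟨b, ⟨a, rfl⟩, rfl⟩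
      exact ⟨⟨f₁ a, rfl⟩, ⟨f₂ a, hg₂pos a⟩⟩
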